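/- arXiv:0803.0904 — 2 statements merged into one kernel-verified Lean document; each statement's English description precedes it below -/
import Mathlib

section
/- If v_k ∈ 𝒞 and v_k → v̄ uniformly on Θ for some v̄ ∈ 𝒞, then I[v_k] → I[v̄] as k → ∞. -/
open scoped RealInnerProductSpace
open MeasureTheory Filter

noncomputable section

/-- `b` is a subgradient of `v` at `x`, relative to the domain `Θ`. -/
def IsSubgradientOn {n : ℕ} (Θ : Set (EuclideanSpace ℝ (Fin n)))
    (v : EuclideanSpace ℝ (Fin n) → ℝ) (b x : EuclideanSpace ℝ (Fin n)) : Prop :=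
  ∀ y ∈ Θ, ⟪b, y - x⟫ ≤ v y - v x

/-- Membership in the admissible class `𝒞`. -/
def MemC {n : ℕ} (Θ Q : Set (EuclideanSpace ℝ (Fin n)))
    (v : EuclideanSpace ℝ (Fin n) → ℝ) : Prop :=
  ConvexOn ℝ Θ v ∧ (∀ x ∈ Θ, 0 ≤ v x) ∧
    (∀ x ∈ Θ, ∀ b : EuclideanSpace ℝ (Fin n), IsSubgradientOn Θ v b x → b ∈ Q)

/-- The functional `I[v] = ∫_Θ (v(θ) − θ·∇v(θ) + C(∇v(θ))) dθ`. -/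
def Ifun {n : ℕ} (Θ : Set (EuclideanSpace ℝ (Fin n)))
    (C : EuclideanSpace ℝ (Fin n) → ℝ) (v : EuclideanSpace ℝ (Fin n) → ℝ) : ℝ :=
  ∫ θ in Θ, (v θ - ⟪θ, gradient v θ⟫ + C (gradient v θ))

section Aux

open Set
open scoped Topology

lemma aux_deriv_le {g : ℝ → ℝ} {g' c δ : ℝ} (hδ : 0 < δ) (hg : HasDerivAt g g' 0)
    (h : ∀ t ∈ Set.Ioo (0:ℝ) δ, g t - g 0 ≤ t * c) : g' ≤ c := by
  have h1 : Tendsto (slope g 0) (𝓝[>] (0:ℝ)) (𝓝 g') :=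
    (hasDerivAt_iff_tendsto_slope.1 hg).mono_left
      (nhdsWithin_mono _ fun t ht => ne_of_gt ht)
  refine le_of_tendsto h1 ?_
  filter_upwards [Ioo_mem_nhdsGT_of_mem ⟨le_refl (0:ℝ), hδ⟩] with t ht
  have ht0 : (0:ℝ) < t := ht.1
  rw [slope_def_field, div_le_iff₀ (by simpa using ht0)]
  calc g t - g 0 ≤ t * c := h t ht
    _ = c * (t - 0) := by ring

lemma aux_le_deriv {g : ℝ → ℝ} {g' c δ : ℝ} (hδ : 0 < δ) (hg : HasDerivAt g g' 0)
    (h : ∀ t ∈ Set.Ioo (0:ℝ) δ, t * c ≤ g t - g 0) : c ≤ g' := by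
  have := aux_deriv_le (g := fun t => -g t) (g' := -g') (c := -c) hδ hg.neg ?_
  · linarith
  · intro t ht
    have h2 := h t ht
    show -g t - -g 0 ≤ t * -c
    nlinarith

variable {n : ℕ}

local notation "E" => EuclideanSpace ℝ (Fin n)

lemma hasDerivAt_line {v : E → ℝ} {θ u : E} (hd : DifferentiableAt ℝ v θ) :
    HasDerivAt (fun t : ℝ => v (θ + t • u)) ⟪gradient v θ, u⟫ 0 := by
  have hc : HasDerivAt (fun t : ℝ => θ + t • u) u 0 := by
    simpa using ((hasDerivAt_id (0:ℝ)).smul_const u).const_add θ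
  have hf : HasFDerivAt v (fderiv ℝ v θ) ((fun t : ℝ => θ + t • u) 0) := by
    simpa using hd.hasFDerivAt
  have := hf.comp_hasDerivAt 0 hc
  have heq : ⟪gradient v θ, u⟫ = fderiv ℝ v θ u := by
    simp [gradient, InnerProductSpace.toDual_symm_apply]
  rw [heq]
  exact this

lemma isSubgradientOn_gradient {Θ : Set E} {w : E → ℝ}
    (hw : ConvexOn ℝ Θ w) {θ : E} (hθ : θ ∈ interior Θ) (hd : DifferentiableAt ℝ w θ) :
    IsSubgradientOn Θ w (gradient w θ) θ := by
  intro y hy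
  have hθΘ : θ ∈ Θ := interior_subset hθ
  refine aux_deriv_le (δ := 1) one_pos (hasDerivAt_line (u := y - θ) hd) ?_
  intro t ht
  have hcomb : θ + t • (y - θ) = (1 - t) • θ + t • y := by module
  have hle := hw.2 hθΘ hy (by linarith [ht.2] : (0:ℝ) ≤ 1 - t) ht.1.le (by ring)
  rw [← hcomb] at hle
  simp only [smul_eq_mul] at hle
  have h0 : θ + (0:ℝ) • (y - θ) = θ := by simp
  rw [h0]
  nlinarith [hle]

lemma subgradient_eq_gradient {Θ : Set E} {w : E → ℝ} {b θ : E} (hθ : θ ∈ interior Θ)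
    (hd : DifferentiableAt ℝ w θ) (hb : IsSubgradientOn Θ w b θ) :
    b = gradient w θ := by
  have key : ∀ u : E, ⟪b, u⟫ ≤ ⟪gradient w θ, u⟫ := by
    intro u
    obtain ⟨ε, hε, hball⟩ := Metric.isOpen_iff.1 isOpen_interior θ hθ
    have hδ : 0 < ε / (‖u‖ + 1) := div_pos hε (by positivity)
    refine aux_le_deriv hδ (hasDerivAt_line hd) ?_
    intro t ht
    have hmem : θ + t • u ∈ Θ := by
      refine interior_subset (hball ?_)
      rw [Metric.mem_ball, dist_eq_norm]
      have : ‖θ + t • u - θ‖ = t * ‖u‖ := by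
        rw [add_sub_cancel_left, norm_smul, Real.norm_eq_abs, abs_of_pos ht.1]
      rw [this]
      calc t * ‖u‖ ≤ t * (‖u‖ + 1) := by nlinarith [ht.1]
        _ < (ε / (‖u‖ + 1)) * (‖u‖ + 1) := by
            apply mul_lt_mul_of_pos_right ht.2 (by positivity)
        _ = ε := by field_simp
    have h2 := hb _ hmem
    have h3 : θ + t • u - θ = t • u := by abel
    rw [h3, real_inner_smul_right] at h2
    have h4 : (fun s : ℝ => w (θ + s • u)) 0 = w θ := by simp
    simpa [h4] using h2
  have h2 : ⟪b - gradient w θ, b - gradient w θ⟫ ≤ 0 := by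
    have hk := key (b - gradient w θ)
    rw [inner_sub_left]
    linarith
  have h3 := real_inner_self_nonpos.1 h2
  rw [sub_eq_zero] at h3
  exact h3

lemma exists_subgradient {Θ : Set E} {w : E → ℝ} (hΘconv : Convex ℝ Θ)
    (hw : ConvexOn ℝ Θ w) {θ : E} (hθ : θ ∈ interior Θ) :
    ∃ b, IsSubgradientOn Θ w b θ := by
  have hθΘ : θ ∈ Θ := interior_subset hθ
  have hwO : ConvexOn ℝ (interior Θ) w := hw.subset interior_subset hΘconv.interior
  have hcont : ContinuousOn w (interior Θ) := hw.continuousOn_interior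
  set S : Set (E × ℝ) := {p | p.1 ∈ interior Θ ∧ w p.1 < p.2} with hS
  have hSconv : Convex ℝ S := hwO.convex_strict_epigraph
  have hSopen : IsOpen S := by
    rw [isOpen_iff_mem_nhds]
    rintro ⟨x, r⟩ ⟨hx, hr⟩
    have hcx : ContinuousAt w x := hcont.continuousAt (isOpen_interior.mem_nhds hx)
    have h1 : ∀ᶠ p : E × ℝ in nhds (x, r), p.1 ∈ interior Θ :=
      continuousAt_fst.eventually (isOpen_interior.eventually_mem hx)
    have hc2 : ContinuousAt (fun p : E × ℝ => p.2 - w p.1) (x, r) :=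
      continuousAt_snd.sub (hcx.comp continuousAt_fst)
    have h2 : ∀ᶠ p : E × ℝ in nhds (x, r), 0 < p.2 - w p.1 :=
      hc2 (Ioi_mem_nhds (sub_pos.2 hr))
    filter_upwards [h1, h2] with p hp1 hp2
    exact ⟨hp1, by linarith⟩
  have hp₀ : ((θ, w θ) : E × ℝ) ∉ S := fun h => lt_irrefl _ h.2
  obtain ⟨f, hf⟩ := geometric_hahn_banach_point_open hSconv hSopen hp₀
  set c : ℝ := f ((0 : E), (1 : ℝ)) with hc
  have hft : ∀ (y : E) (t : ℝ), f (y, t) = f (y, 0) + t * c := by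
    intro y t
    have hyt : ((y, t) : E × ℝ) = (y, (0:ℝ)) + t • ((0:E), (1:ℝ)) := by
      simp [Prod.ext_iff]
    rw [hyt, map_add, f.map_smul, smul_eq_mul]
  have hcpos : 0 < c := by
    have h1 := hf ((θ, w θ + 1)) ⟨hθ, by show w θ < w θ + 1; linarith⟩
    rw [hft θ (w θ), hft θ (w θ + 1)] at h1
    linarith
  set b : E := (InnerProductSpace.toDual ℝ E).symm
      ((-(1/c)) • (f.comp (ContinuousLinearMap.inl ℝ E ℝ))) with hbdef
  have hbin : ∀ u : E, ⟪b, u⟫ = -(1/c) * f (u, 0) := by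
    intro u
    rw [hbdef, InnerProductSpace.toDual_symm_apply]
    simp
  have hO_ineq : ∀ y ∈ interior Θ, ⟪b, y - θ⟫ ≤ w y - w θ := by
    intro y hy
    have h3 : f (θ, 0) + w θ * c ≤ f (y, 0) + w y * c := by
      by_contra hcon
      push_neg at hcon
      set s : ℝ := (f (θ, 0) + w θ * c - (f (y, 0) + w y * c)) / c with hsdef
      have hs : 0 < s := div_pos (by linarith) hcpos
      have h4 := hf (y, w y + s) ⟨hy, by show w y < w y + s; linarith⟩
      rw [hft θ (w θ), hft y (w y + s)] at h4
      have hsc : s * c = f (θ, 0) + w θ * c - (f (y, 0) + w y * c) := by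
        rw [hsdef, div_mul_cancel₀ _ (ne_of_gt hcpos)]
      nlinarith
    have h5 : ⟪b, y - θ⟫ = -(1/c) * (f (y, 0) - f (θ, 0)) := by
      rw [hbin]
      have : ((y - θ : E), (0:ℝ)) = ((y, (0:ℝ)) : E × ℝ) - (θ, (0:ℝ)) := by
        simp [Prod.ext_iff]
      rw [this, map_sub]
    rw [h5]
    have h6 : -(1/c) * (f (y, 0) - f (θ, 0)) = (f (θ, 0) - f (y, 0)) / c := by ring
    rw [h6, div_le_iff₀ hcpos]
    nlinarith
  refine ⟨b, ?_⟩
  intro y hy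
  have hmid : θ + (1/2 : ℝ) • (y - θ) ∈ interior Θ := by
    have := hΘconv.add_smul_sub_mem_interior hy hθ
        (t := (1/2 : ℝ)) ⟨by norm_num, by norm_num⟩
    have heq : y + (1/2 : ℝ) • (θ - y) = θ + (1/2 : ℝ) • (y - θ) := by module
    rwa [heq] at this
  have h6 := hO_ineq _ hmid
  have h7 : θ + (1/2 : ℝ) • (y - θ) - θ = (1/2 : ℝ) • (y - θ) := by abel
  rw [h7, real_inner_smul_right] at h6
  have h8 : w (θ + (1/2 : ℝ) • (y - θ)) ≤ (1/2 : ℝ) * w θ + (1/2 : ℝ) * w y := by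
    have hcomb : θ + (1/2:ℝ) • (y - θ) = (1/2 : ℝ) • θ + (1/2 : ℝ) • y := by module
    rw [hcomb]
    simpa using hw.2 hθΘ hy (by norm_num : (0:ℝ) ≤ 1/2) (by norm_num : (0:ℝ) ≤ 1/2)
      (by norm_num)
  linarith

lemma memC_lipschitz {Θ Q : Set E} {w : E → ℝ} {M : NNReal}
    (hM : ∀ q ∈ Q, ‖q‖ ≤ (M : ℝ)) (hΘconv : Convex ℝ Θ) (hw : MemC Θ Q w) :
    LipschitzOnWith M w (interior Θ) := by
  rw [lipschitzOnWith_iff_dist_le_mul]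
  intro x hx y hy
  obtain ⟨bx, hbx⟩ := exists_subgradient hΘconv hw.1 hx
  obtain ⟨bY, hbY⟩ := exists_subgradient hΘconv hw.1 hy
  have h1 := hbx y (interior_subset hy)
  have h2 := hbY x (interior_subset hx)
  have hbxM : ‖bx‖ ≤ (M : ℝ) := hM bx (hw.2.2 x (interior_subset hx) bx hbx)
  have hbYM : ‖bY‖ ≤ (M : ℝ) := hM bY (hw.2.2 y (interior_subset hy) bY hbY)
  have e1 : |⟪bx, y - x⟫| ≤ ‖bx‖ * ‖y - x‖ := abs_real_inner_le_norm _ _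
  have e2 : |⟪bY, x - y⟫| ≤ ‖bY‖ * ‖x - y‖ := abs_real_inner_le_norm _ _
  have hnn : ‖y - x‖ = ‖x - y‖ := norm_sub_rev _ _
  rw [Real.dist_eq, dist_eq_norm, abs_le]
  have hnorm0 : (0:ℝ) ≤ ‖x - y‖ := norm_nonneg _
  constructor
  · nlinarith [neg_abs_le ⟪bY, x - y⟫, mul_le_mul_of_nonneg_right hbYM hnorm0]
  · nlinarith [neg_abs_le ⟪bx, y - x⟫, mul_le_mul_of_nonneg_right hbxM hnorm0,
      hnn ▸ e1]

end Aux

/-- if `v_k ∈ 𝒞` converge uniformly on `Θ` to `v̄ ∈ 𝒞`, then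
`I[v_k] → I[v̄]`. -/
theorem stmt5 {n : ℕ} (hn : 1 ≤ n) (Θ Q : Set (EuclideanSpace ℝ (Fin n)))
    (hΘcomp : IsCompact Θ) (hΘconv : Convex ℝ Θ) (hΘint : (interior Θ).Nonempty)
    (hQne : Q.Nonempty) (hQcomp : IsCompact Q) (hQconv : Convex ℝ Q)
    (C : EuclideanSpace ℝ (Fin n) → ℝ)
    (hCstrict : StrictConvexOn ℝ Set.univ C) (hC1 : ContDiff ℝ 1 C)
    (v : ℕ → EuclideanSpace ℝ (Fin n) → ℝ) (hv : ∀ k, MemC Θ Q (v k))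
    (vbar : EuclideanSpace ℝ (Fin n) → ℝ) (hvbar : MemC Θ Q vbar)
    (hunif : TendstoUniformlyOn v vbar atTop Θ) :
    Tendsto (fun k => Ifun Θ C (v k)) atTop (nhds (Ifun Θ C vbar)) := by
  classical
  have hΘmeas : MeasurableSet Θ := hΘcomp.isClosed.measurableSet
  -- bound on Q
  obtain ⟨M₀, hM₀⟩ := hQcomp.isBounded.subset_closedBall 0
  set M : ℝ := max M₀ 0 with hMdef
  have hMQ : ∀ q ∈ Q, ‖q‖ ≤ M := by
    intro q hq
    have := hM₀ hq
    rw [Metric.mem_closedBall, dist_zero_right] at this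
    exact this.trans (le_max_left _ _)
  have hM0 : (0:ℝ) ≤ M := le_max_right _ _
  set Mn : NNReal := ⟨M, hM0⟩ with hMn
  have hMQ' : ∀ q ∈ Q, ‖q‖ ≤ (Mn : ℝ) := hMQ
  -- Lipschitz on the interior
  have hlipv : ∀ k, LipschitzOnWith Mn (v k) (interior Θ) :=
    fun k => memC_lipschitz hMQ' hΘconv (hv k)
  have hlipbar : LipschitzOnWith Mn vbar (interior Θ) :=
    memC_lipschitz hMQ' hΘconv hvbar
  -- a.e. facts
  have hdiffk : ∀ k : ℕ, ∀ᵐ x : EuclideanSpace ℝ (Fin n), x ∈ interior Θ → DifferentiableAt ℝ (v k) x := by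
    intro k
    filter_upwards [(hlipv k).ae_differentiableWithinAt_of_mem (μ := volume)] with x hx hxO
    exact (hx hxO).differentiableAt (isOpen_interior.mem_nhds hxO)
  have hdiffbar : ∀ᵐ x : EuclideanSpace ℝ (Fin n), x ∈ interior Θ → DifferentiableAt ℝ vbar x := by
    filter_upwards [hlipbar.ae_differentiableWithinAt_of_mem (μ := volume)] with x hx hxO
    exact (hx hxO).differentiableAt (isOpen_interior.mem_nhds hxO)
  have hΘO : volume (Θ \ interior Θ) = 0 := by
    refine measure_mono_null ?_ (hΘconv.addHaar_frontier volume)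
    intro x hx
    exact ⟨subset_closure hx.1, hx.2⟩
  have haeO : ∀ᵐ θ ∂(volume.restrict Θ), θ ∈ interior Θ := by
    rw [ae_restrict_iff' hΘmeas]
    filter_upwards [measure_eq_zero_iff_ae_notMem.mp hΘO] with x hx hxΘ
    by_contra hxO
    exact hx ⟨hxΘ, hxO⟩
  have hae : ∀ᵐ θ ∂(volume.restrict Θ), θ ∈ interior Θ ∧ DifferentiableAt ℝ vbar θ ∧
      ∀ k, DifferentiableAt ℝ (v k) θ := by
    filter_upwards [haeO, ae_restrict_of_ae hdiffbar,
      ae_restrict_of_ae (ae_all_iff.2 hdiffk)] with θ h1 h2 h3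
    exact ⟨h1, h2 h1, fun k => h3 k h1⟩
  -- the integrand
  set F : (EuclideanSpace ℝ (Fin n) → ℝ) → EuclideanSpace ℝ (Fin n) → ℝ :=
    fun w θ => w θ - ⟪θ, gradient w θ⟫ + C (gradient w θ) with hF
  -- gradients of admissible functions lie in Q at interior differentiability points
  have hgradQ : ∀ (w : EuclideanSpace ℝ (Fin n) → ℝ), MemC Θ Q w → ∀ θ ∈ interior Θ,
      DifferentiableAt ℝ w θ → gradient w θ ∈ Q := by
    intro w hw θ hθ hd
    exact hw.2.2 θ (interior_subset hθ) _ (isSubgradientOn_gradient hw.1 hθ hd)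
  -- a.e. convergence of integrands
  have hptconv : ∀ᵐ θ ∂(volume.restrict Θ),
      Tendsto (fun k => F (v k) θ) atTop (nhds (F vbar θ)) := by
    filter_upwards [hae] with θ hθ
    obtain ⟨hθO, hdbar, hdk⟩ := hθ
    have hgconv : Tendsto (fun k => gradient (v k) θ) atTop (nhds (gradient vbar θ)) := by
      apply tendsto_of_subseq_tendsto
      intro ns hns
      have hmemQ : ∀ j : ℕ, gradient (v (ns j)) θ ∈ Q :=
        fun j => hgradQ (v (ns j)) (hv (ns j)) θ hθO (hdk (ns j))
      obtain ⟨b, hbQ, φ, hφ, hφconv⟩ := hQcomp.tendsto_subseq hmemQ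
      have hns' : Tendsto (fun j => ns (φ j)) atTop atTop := hns.comp hφ.tendsto_atTop
      have hbsub : IsSubgradientOn Θ vbar b θ := by
        intro y hy
        have hle : ∀ j, ⟪gradient (v (ns (φ j))) θ, y - θ⟫
            ≤ v (ns (φ j)) y - v (ns (φ j)) θ :=
          fun j => isSubgradientOn_gradient (hv _).1 hθO (hdk _) y hy
        have hL : Tendsto (fun j => ⟪gradient (v (ns (φ j))) θ, y - θ⟫) atTop
            (nhds ⟪b, y - θ⟫) := hφconv.inner tendsto_const_nhds
        have hRt : Tendsto (fun j => v (ns (φ j)) y - v (ns (φ j)) θ) atTop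
            (nhds (vbar y - vbar θ)) :=
          ((hunif.tendsto_at hy).comp hns').sub
            ((hunif.tendsto_at (interior_subset hθO)).comp hns')
        exact le_of_tendsto_of_tendsto' hL hRt hle
      have hbeq : b = gradient vbar θ := subgradient_eq_gradient hθO hdbar hbsub
      exact ⟨φ, hbeq ▸ hφconv⟩
    have h1 : Tendsto (fun k => v k θ) atTop (nhds (vbar θ)) :=
      hunif.tendsto_at (interior_subset hθO)
    exact (h1.sub (tendsto_const_nhds.inner hgconv)).add
      ((hC1.continuous.tendsto _).comp hgconv)
  -- bounds
  obtain ⟨x₀, hx₀⟩ := hΘint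
  obtain ⟨R₀, hR₀⟩ := hΘcomp.isBounded.subset_closedBall 0
  set R : ℝ := max R₀ 0 with hRdef
  have hRΘ : ∀ x ∈ Θ, ‖x‖ ≤ R := by
    intro x hx
    have := hR₀ hx
    rw [Metric.mem_closedBall, dist_zero_right] at this
    exact this.trans (le_max_left _ _)
  set Bv : ℝ := vbar x₀ + M * Metric.diam Θ with hBv
  have hvbarB : ∀ x ∈ interior Θ, vbar x ≤ Bv := by
    intro x hx
    have hd := (lipschitzOnWith_iff_dist_le_mul.1 hlipbar) x hx x₀ hx₀
    have hdiam : dist x x₀ ≤ Metric.diam Θ :=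
      Metric.dist_le_diam_of_mem hΘcomp.isBounded (interior_subset hx) (interior_subset hx₀)
    rw [Real.dist_eq] at hd
    have habs := abs_le.1 hd
    have : (Mn : ℝ) = M := rfl
    nlinarith [habs.2, hdiam, hM0, dist_nonneg (x := x) (y := x₀)]
  obtain ⟨K, hK⟩ := (isCompact_closedBall (0:EuclideanSpace ℝ (Fin n)) M).exists_bound_of_continuousOn
      hC1.continuous.continuousOn
  set B : ℝ := (Bv + 1) + R * M + K with hB
  have hbound : ∀ᶠ k in atTop, ∀ᵐ θ ∂(volume.restrict Θ), ‖F (v k) θ‖ ≤ B := by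
    have hev := (Metric.tendstoUniformlyOn_iff.1 hunif) 1 one_pos
    filter_upwards [hev] with k hk
    filter_upwards [hae] with θ hθ
    obtain ⟨hθO, hdbar, hdk⟩ := hθ
    have hθΘ : θ ∈ Θ := interior_subset hθO
    have hgQ : gradient (v k) θ ∈ Q := hgradQ (v k) (hv k) θ hθO (hdk k)
    have h1 : |v k θ| ≤ Bv + 1 := by
      have hdist := hk θ hθΘ
      rw [Real.dist_eq] at hdist
      have h0 : 0 ≤ v k θ := (hv k).2.1 θ hθΘ
      have hvb : vbar θ ≤ Bv := hvbarB θ hθO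
      have := abs_lt.1 hdist
      rw [abs_of_nonneg h0]
      linarith [this.1, this.2]
    have h2 : |⟪θ, gradient (v k) θ⟫| ≤ R * M := by
      refine (abs_real_inner_le_norm _ _).trans ?_
      have := hMQ _ hgQ
      have := hRΘ θ hθΘ
      nlinarith [norm_nonneg (gradient (v k) θ), norm_nonneg θ]
    have h3 : |C (gradient (v k) θ)| ≤ K := by
      have : gradient (v k) θ ∈ Metric.closedBall (0:EuclideanSpace ℝ (Fin n)) M := by
        rw [Metric.mem_closedBall, dist_zero_right]
        exact hMQ _ hgQ
      simpa using hK _ this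
    have habs : |F (v k) θ| ≤ |v k θ| + |⟪θ, gradient (v k) θ⟫| + |C (gradient (v k) θ)| := by
      rw [hF]
      calc |v k θ - ⟪θ, gradient (v k) θ⟫ + C (gradient (v k) θ)|
          ≤ |v k θ - ⟪θ, gradient (v k) θ⟫| + |C (gradient (v k) θ)| := abs_add_le _ _
        _ ≤ |v k θ| + |⟪θ, gradient (v k) θ⟫| + |C (gradient (v k) θ)| := by
            have := abs_sub (v k θ) ⟪θ, gradient (v k) θ⟫
            linarith
    rw [Real.norm_eq_abs]
    rw [hB]
    linarith
  -- integrability of the bound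
  have : IsFiniteMeasure (volume.restrict Θ) := by
    constructor
    rw [Measure.restrict_apply_univ]
    exact hΘcomp.measure_lt_top
  have hboundint : Integrable (fun _ : EuclideanSpace ℝ (Fin n) => B) (volume.restrict Θ) := integrable_const B
  -- measurability
  have hres : volume.restrict Θ = volume.restrict (interior Θ) := by
    refine (Measure.restrict_congr_set ?_).symm
    rw [MeasureTheory.ae_eq_set]
    constructor
    · exact measure_mono_null (fun x hx => (hx.2 (interior_subset hx.1)).elim) hΘO
    · exact hΘO
  have hmeas : ∀ w : EuclideanSpace ℝ (Fin n) → ℝ, ConvexOn ℝ Θ w →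
      AEStronglyMeasurable (F w) (volume.restrict Θ) := by
    intro w hw
    rw [hres]
    have hgrad : Measurable (fun θ : EuclideanSpace ℝ (Fin n) => gradient w θ) :=
      ((InnerProductSpace.toDual ℝ (EuclideanSpace ℝ (Fin n))).symm.continuous.measurable).comp
        (measurable_fderiv ℝ w)
    have hwm : AEStronglyMeasurable w (volume.restrict (interior Θ)) :=
      hw.continuousOn_interior.aestronglyMeasurable isOpen_interior.measurableSet
    have hinner : Measurable (fun θ : EuclideanSpace ℝ (Fin n) => ⟪θ, gradient w θ⟫) :=
      continuous_inner.measurable.comp (measurable_id.prodMk hgrad)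
    have hCw : Measurable (fun θ : EuclideanSpace ℝ (Fin n) => C (gradient w θ)) :=
      hC1.continuous.measurable.comp hgrad
    exact (hwm.sub hinner.aestronglyMeasurable).add hCw.aestronglyMeasurable
  have hmeasF : ∀ᶠ k in atTop, AEStronglyMeasurable (F (v k)) (volume.restrict Θ) :=
    Eventually.of_forall fun k => hmeas _ (hv k).1
  have hmain := tendsto_integral_filter_of_dominated_convergence (μ := volume.restrict Θ)
      (fun _ => B) hmeasF hbound hboundint hptconv
  exact hmain
end
end

section
/- Let A ⊆ ℝⁿ be an open convex set and let f_k : A → ℝ be convex functions converging uniformly on A to a (necessarily convex) function f̄. Then for Lebesgue-almost every x ∈ A, f̄ and all the f_k are differentiable at x and ∇f_k(x) → ∇f̄(x). -/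
open MeasureTheory Filter Set Metric
open scoped Topology

noncomputable section

section Aux

variable {n : ℕ}

/-- A convex function on an open set in Euclidean space is differentiable a.e. -/
lemma aux_ae_diff {A : Set (EuclideanSpace ℝ (Fin n))} (hAopen : IsOpen A)
    {g : EuclideanSpace ℝ (Fin n) → ℝ} (hg : ConvexOn ℝ A g) :
    ∀ᵐ x ∂(volume.restrict A), DifferentiableAt ℝ g x := by
  have hloc := hg.locallyLipschitzOn hAopen
  -- at each point of A, find a ball where g is a.e. differentiable
  have key : ∀ x ∈ A, ∃ r > 0, ball x r ⊆ A ∧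
      (volume {y | y ∈ ball x r ∧ ¬ DifferentiableAt ℝ g y} = 0) := by
    intro x hx
    obtain ⟨K, t, ht, hK⟩ := hloc hx
    rw [hAopen.nhdsWithin_eq hx] at ht
    obtain ⟨r, hr, hball⟩ := Metric.mem_nhds_iff.1 (Filter.inter_mem ht (hAopen.mem_nhds hx))
    refine ⟨r, hr, fun y hy => (hball hy).2, ?_⟩
    have hK' : LipschitzOnWith K g (ball x r) := hK.mono (fun y hy => (hball hy).1)
    have h2 : ∀ᵐ y ∂(volume : Measure (EuclideanSpace ℝ (Fin n))),
        y ∈ ball x r → DifferentiableAt ℝ g y := by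
      filter_upwards [hK'.ae_differentiableWithinAt_of_mem (μ := volume)] with y hy hyb
      exact (hy hyb).differentiableAt (isOpen_ball.mem_nhds hyb)
    rw [ae_iff] at h2
    convert h2 using 2
    ext y
    simp [Classical.not_imp]
  -- countable cover
  choose! r hr hrA hrnull using key
  obtain ⟨T, hTA, hTc, hTcover⟩ := TopologicalSpace.countable_cover_nhdsWithin
    (f := fun x => ball x (r x)) (s := A)
    (fun x hx => nhdsWithin_le_nhds (ball_mem_nhds x (hr x hx)))
  rw [ae_restrict_iff' hAopen.measurableSet, ae_iff]
  have hsub : {y | ¬ (y ∈ A → DifferentiableAt ℝ g y)} ⊆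
      ⋃ x ∈ T, {y | y ∈ ball x (r x) ∧ ¬ DifferentiableAt ℝ g y} := by
    intro y hy
    rw [mem_setOf_eq, Classical.not_imp] at hy
    obtain ⟨hyA, hyd⟩ := hy
    obtain ⟨x, hxT, hyx⟩ := mem_iUnion₂.1 (hTcover hyA)
    exact mem_iUnion₂.2 ⟨x, hxT, hyx, hyd⟩
  refine measure_mono_null hsub ?_
  exact (measure_biUnion_null_iff hTc).2 fun x hxT => hrnull x (hTA hxT)

/-- The line map `t ↦ g (x + t • v)` has derivative `⟪∇g x, v⟫` at `0`. -/
lemma aux_line_deriv {g : EuclideanSpace ℝ (Fin n) → ℝ} {x v : EuclideanSpace ℝ (Fin n)}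
    (hd : DifferentiableAt ℝ g x) :
    HasDerivAt (fun t : ℝ => g (x + t • v)) (inner ℝ (gradient g x) v : ℝ) 0 := by
  have hgrad := hd.hasGradientAt.hasFDerivAt
  have hc : HasDerivAt (fun t : ℝ => x + t • v) v 0 := by
    simpa using ((hasDerivAt_id (0 : ℝ)).smul_const v).const_add x
  have key : HasDerivAt (fun t : ℝ => g (x + t • v))
      ((InnerProductSpace.toDual ℝ (EuclideanSpace ℝ (Fin n)) (gradient g x)) v) 0 := by
    refine HasFDerivAt.comp_hasDerivAt 0 ?_ hc
    simpa using hgrad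
  simpa [InnerProductSpace.toDual_apply_apply] using key

/-- Subgradient inequality for a differentiable convex function. -/
lemma aux_subgrad {A : Set (EuclideanSpace ℝ (Fin n))}
    {g : EuclideanSpace ℝ (Fin n) → ℝ} (hg : ConvexOn ℝ A g)
    {x y : EuclideanSpace ℝ (Fin n)} (hx : x ∈ A) (hy : y ∈ A)
    (hd : DifferentiableAt ℝ g x) :
    (inner ℝ (gradient g x) (y - x) : ℝ) ≤ g y - g x := by
  set φ : ℝ → ℝ := fun t => g (x + t • (y - x)) with hφ
  have hline := aux_line_deriv (v := y - x) hd
  have hslope : Tendsto (slope φ 0) (𝓝[>] (0 : ℝ)) (𝓝 (inner ℝ (gradient g x) (y - x) : ℝ)) :=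
    (hasDerivAt_iff_tendsto_slope.1 hline).mono_left
      (nhdsWithin_mono 0 (fun t ht => ne_of_gt ht))
  refine le_of_tendsto hslope ?_
  filter_upwards [Ioc_mem_nhdsGT (zero_lt_one (α := ℝ))] with t ht
  have ht0 : (0 : ℝ) < t := ht.1
  have ht1 : t ≤ 1 := ht.2
  -- convexity along the segment
  have hconv : φ t ≤ (1 - t) * φ 0 + t * φ 1 := by
    have h := hg.2 hx hy (by linarith : (0:ℝ) ≤ 1 - t) ht0.le (by ring)
    have e0 : x + (0 : ℝ) • (y - x) = x := by simp
    have e1 : x + (1 : ℝ) • (y - x) = y := by simp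
    have et : x + t • (y - x) = (1 - t) • x + t • y := by
      rw [smul_sub]; module
    simp only [hφ, e0, e1, et]
    simpa [smul_eq_mul] using h
  have hφ0 : φ 0 = g x := by simp [hφ]
  have hφ1 : φ 1 = g y := by simp [hφ]
  rw [slope_def_field, sub_zero, div_le_iff₀ ht0]
  nlinarith [hconv, hφ0, hφ1]

end Aux

open scoped RealInnerProductSpace

set_option maxHeartbeats 1600000 in
/-- if convex functions `f_k` on an open convex set `A ⊆ ℝⁿ` converge uniformly
on `A` to `f̄`, then for Lebesgue-a.e. `x ∈ A`, `f̄` and all `f_k` are differentiable at `x`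
and `∇f_k(x) → ∇f̄(x)`. -/
theorem stmt6 {n : ℕ} (A : Set (EuclideanSpace ℝ (Fin n)))
    (hAopen : IsOpen A) (hAconv : Convex ℝ A)
    (f : ℕ → EuclideanSpace ℝ (Fin n) → ℝ) (hf : ∀ k, ConvexOn ℝ A (f k))
    (fbar : EuclideanSpace ℝ (Fin n) → ℝ)
    (hunif : TendstoUniformlyOn f fbar atTop A) :
    ∀ᵐ x ∂(volume.restrict A),
      DifferentiableAt ℝ fbar x ∧ (∀ k, DifferentiableAt ℝ (f k) x) ∧
        Tendsto (fun k => gradient (f k) x) atTop (nhds (gradient fbar x)) := by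
  -- fbar is convex
  have hfbarconv : ConvexOn ℝ A fbar := by
    refine ⟨hAconv, fun x hx y hy a b ha hb hab => ?_⟩
    have hz' := hunif.tendsto_at (hAconv hx hy ha hb hab)
    refine le_of_tendsto_of_tendsto' hz'
      (((hunif.tendsto_at hx).const_mul a).add ((hunif.tendsto_at hy).const_mul b))
      (fun k => (hf k).2 hx hy ha hb hab)
  filter_upwards [aux_ae_diff hAopen hfbarconv,
    ae_all_iff.2 (fun k => aux_ae_diff hAopen (hf k)),
    ae_restrict_mem hAopen.measurableSet] with x hdbar hdk hxA
  refine ⟨hdbar, hdk, ?_⟩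
  -- inner product convergence for each direction v
  have hinner : ∀ v : EuclideanSpace ℝ (Fin n),
      Tendsto (fun k => (⟪gradient (f k) x, v⟫ : ℝ)) atTop (𝓝 (⟪gradient fbar x, v⟫ : ℝ)) := by
    intro v
    rw [Metric.tendsto_atTop]
    intro ε hε
    set d : ℝ := ⟪gradient fbar x, v⟫ with hd
    have hline := aux_line_deriv (v := v) hdbar
    have hslope := hasDerivAt_iff_tendsto_slope.1 hline
    set φ : ℝ → ℝ := fun t => fbar (x + t • v) with hφ
    have hballmem : ∀ᶠ y : ℝ in 𝓝 d, |y - d| < ε / 2 :=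
      eventually_abs_sub_lt d (by linarith)
    have hmemA : ∀ᶠ t : ℝ in 𝓝 0, x + t • v ∈ A := by
      have hc : Continuous (fun t : ℝ => x + t • v) := by continuity
      exact hc.continuousAt.eventually_mem (by simpa using hAopen.mem_nhds hxA)
    have hq1 : ∀ᶠ t : ℝ in 𝓝[>] 0, |slope φ 0 t - d| < ε / 2 :=
      (hslope.mono_left (nhdsWithin_mono 0 (fun t ht => ne_of_gt ht))).eventually hballmem
    have hneg0 : Tendsto (fun t : ℝ => -t) (𝓝[>] (0:ℝ)) (𝓝 (0:ℝ)) := by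
      have h := (continuous_neg.tendsto (0:ℝ)).mono_left
        (nhdsWithin_le_nhds (s := Set.Ioi (0:ℝ)))
      simpa using h
    have hneg : Tendsto (fun t : ℝ => -t) (𝓝[>] (0:ℝ)) (𝓝[≠] (0:ℝ)) := by
      rw [tendsto_nhdsWithin_iff]
      refine ⟨hneg0, ?_⟩
      filter_upwards [self_mem_nhdsWithin] with t ht
      simpa using ne_of_lt (neg_lt_zero.2 ht)
    have hq2 : ∀ᶠ t : ℝ in 𝓝[>] 0, |slope φ 0 (-t) - d| < ε / 2 :=
      (hslope.comp hneg).eventually hballmem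
    have hq3 : ∀ᶠ t : ℝ in 𝓝[>] 0, x + t • v ∈ A := hmemA.filter_mono nhdsWithin_le_nhds
    have hq4 : ∀ᶠ t : ℝ in 𝓝[>] 0, x + (-t) • v ∈ A := by
      exact hneg0.eventually hmemA
    obtain ⟨t, ⟨h1, h2, h3, h4⟩, ht0⟩ :=
      ((hq1.and (hq2.and (hq3.and hq4))).and self_mem_nhdsWithin).exists
    -- uniform convergence bound
    obtain ⟨N, hN⟩ : ∃ N, ∀ k ≥ N, ∀ y ∈ A, dist (fbar y) (f k y) < t * ε / 4 := by
      have := (tendstoUniformlyOn_iff.1 hunif) (t * ε / 4) (by positivity)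
      rw [eventually_atTop] at this
      exact this
    refine ⟨N, fun k hk => ?_⟩
    have hb1 := hN k hk _ h3
    have hb2 := hN k hk _ h4
    have hbx := hN k hk x hxA
    rw [Real.dist_eq, abs_sub_lt_iff] at hb1 hb2 hbx ⊢
    -- subgradient inequalities for f k (in product form)
    have hup : (⟪gradient (f k) x, v⟫ : ℝ) * t ≤ f k (x + t • v) - f k x := by
      have h := aux_subgrad (hf k) hxA h3 (hdk k)
      have hsub : x + t • v - x = t • v := by abel
      rw [hsub, real_inner_smul_right] at h
      linarith
    have hlow : f k x - f k (x + (-t) • v) ≤ (⟪gradient (f k) x, v⟫ : ℝ) * t := by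
      have h := aux_subgrad (hf k) hxA h4 (hdk k)
      have hsub : x + (-t) • v - x = (-t) • v := by abel
      rw [hsub, real_inner_smul_right] at h
      linarith
    -- slope bounds in product form
    have hs1 : slope φ 0 t = (fbar (x + t • v) - fbar x) / t := by
      rw [slope_def_field, sub_zero]
      simp [hφ]
    have hs2 : slope φ 0 (-t) = (fbar x - fbar (x + (-t) • v)) / t := by
      rw [slope_def_field]
      simp only [hφ, sub_zero, zero_smul, add_zero]
      rw [div_neg, ← neg_div, neg_sub]
    rw [hs1, abs_sub_lt_iff] at h1
    rw [hs2, abs_sub_lt_iff] at h2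
    have hc1 : ((fbar (x + t • v) - fbar x) / t) * t = fbar (x + t • v) - fbar x :=
      div_mul_cancel₀ _ (ne_of_gt ht0)
    have hc2 : ((fbar x - fbar (x + (-t) • v)) / t) * t = fbar x - fbar (x + (-t) • v) :=
      div_mul_cancel₀ _ (ne_of_gt ht0)
    have h1' : fbar (x + t • v) - fbar x - d * t < (ε/2) * t := by
      have hp1 := mul_lt_mul_of_pos_right h1.1 ht0
      rw [sub_mul, hc1] at hp1
      linarith
    have h2' : d * t - (fbar x - fbar (x + (-t) • v)) < (ε/2) * t := by
      have hp2 := mul_lt_mul_of_pos_right h2.2 ht0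
      rw [sub_mul, hc2] at hp2
      linarith
    have keyup : (⟪gradient (f k) x, v⟫ : ℝ) * t < (d + ε) * t := by
      rw [add_mul]
      linarith [hup, hb1.1, hb1.2, hbx.1, hbx.2, h1']
    have keydown : (d - ε) * t < (⟪gradient (f k) x, v⟫ : ℝ) * t := by
      rw [sub_mul]
      linarith [hlow, hb2.1, hb2.2, hbx.1, hbx.2, h2']
    constructor
    · linarith [lt_of_mul_lt_mul_right keyup ht0.le]
    · linarith [lt_of_mul_lt_mul_right keydown ht0.le]
  -- conclude coordinatewise
  have hcoord : ∀ i, Tendsto (fun k => gradient (f k) x i) atTop (𝓝 (gradient fbar x i)) := by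
    intro i
    have := hinner (EuclideanSpace.single i (1 : ℝ))
    simpa only [EuclideanSpace.inner_single_right, conj_trivial, one_mul] using this
  have h1 : Tendsto (fun k => (PiLp.continuousLinearEquiv 2 ℝ (fun _ : Fin n => ℝ))
      (gradient (f k) x)) atTop
      (𝓝 ((PiLp.continuousLinearEquiv 2 ℝ (fun _ : Fin n => ℝ)) (gradient fbar x))) :=
    tendsto_pi_nhds.2 hcoord
  have h2 := (((PiLp.continuousLinearEquiv 2 ℝ (fun _ : Fin n => ℝ)).symm.continuous.tendsto
    _).comp h1)
  simpa [PiLp.coe_symm_continuousLinearEquiv, PiLp.coe_continuousLinearEquiv, Function.comp_def] using h2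
end
end
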